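/- Let (G, p) be a finite critical net in ℝ^k satisfying the balance condition. Then for every e ∈ EuclideanSpace ℝ (Fin k), the following vector identity holds: 2 ∑ ⟪p y − p x, e⟫ · (p y − p x)/‖p y − p x‖ = ∑_{l ∈ ∂X} ( ⟪p n_l, e⟫ · u_l + ⟪u_l, e⟫ · p n_l ), where the left-hand sum runs over the unordered edges {x,y} of G whose two endpoints are both interior (the summand does not depend on the orientation of the edge). -/
import Mathlib


open scoped RealInnerProductSpace

/-- In a finite critical net in `ℝ^k` satisfying the balance
condition, for every `e` one has the vector identity
`2 ∑_{edges {x,y} interior} ⟪p y − p x, e⟫ • (p y − p x)/‖p y − p x‖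
  = ∑_{l ∈ ∂X} (⟪p n_l, e⟫ • u_l + ⟪u_l, e⟫ • p n_l)`,
the left-hand sum over unordered interior edges being written as half the sum over
ordered pairs of adjacent interior vertices. -/
theorem dilation_identity
    {k : ℕ} (hk : 1 ≤ k) {V : Type*} [Fintype V] [DecidableEq V]
    (G : SimpleGraph V) [DecidableRel G.Adj]
    (p : V → EuclideanSpace ℝ (Fin k)) (hinj : Function.Injective p)
    (hdeg1 : ∀ x : V, 1 ≤ G.degree x)
    (hnoLL : ∀ x y : V, G.Adj x y → ¬(G.degree x = 1 ∧ G.degree y = 1))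
    (hbal : ∀ x : V, 2 ≤ G.degree x →
      ∑ y ∈ G.neighborFinset x, (‖p x - p y‖)⁻¹ • (p x - p y) = 0)
    (n : V → V) (hn : ∀ l : V, G.degree l = 1 → G.Adj l (n l))
    (e : EuclideanSpace ℝ (Fin k)) :
    (2 : ℝ) • ((1 / 2 : ℝ) •
        ∑ x ∈ Finset.univ.filter (fun x : V => 2 ≤ G.degree x),
          ∑ y ∈ (G.neighborFinset x).filter (fun y => 2 ≤ G.degree y),
            ⟪p y - p x, e⟫ • ((‖p y - p x‖)⁻¹ • (p y - p x)))
      = ∑ l ∈ Finset.univ.filter (fun l : V => G.degree l = 1),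
          (⟪p (n l), e⟫ • ((‖p l - p (n l)‖)⁻¹ • (p l - p (n l)))
            + ⟪(‖p l - p (n l)‖)⁻¹ • (p l - p (n l)), e⟫ • p (n l)) := by
  classical
  set h : V → V → EuclideanSpace ℝ (Fin k) := fun x y =>
    ⟪p x, e⟫ • ((‖p x - p y‖)⁻¹ • (p x - p y))
      + ⟪(‖p x - p y‖)⁻¹ • (p x - p y), e⟫ • p x with hhdef
  set F : V → V → EuclideanSpace ℝ (Fin k) := fun x y =>
    ⟪p y - p x, e⟫ • ((‖p y - p x‖)⁻¹ • (p y - p x)) with hFdef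
  set I : Finset V := Finset.univ.filter (fun x : V => 2 ≤ G.degree x) with hIdef
  set L : Finset V := Finset.univ.filter (fun l : V => G.degree l = 1) with hLdef
  -- key pointwise identity
  have hHF : ∀ x y : V, (2 : ℝ) • F x y = h x y + h y x := by
    intro x y
    simp only [hhdef, hFdef]
    rw [show p y - p x = -(p x - p y) from (neg_sub _ _).symm]
    simp only [norm_neg, inner_neg_left, real_inner_smul_left, inner_sub_left,
      smul_neg, neg_smul, smul_smul]
    module
  -- balance gives vanishing of the h-sum at interior vertices
  have hzero : ∀ x ∈ I, ∑ y ∈ G.neighborFinset x, h x y = 0 := by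
    intro x hx
    rw [hIdef, Finset.mem_filter] at hx
    have hb := hbal x hx.2
    simp only [hhdef]
    rw [Finset.sum_add_distrib, ← Finset.smul_sum, hb, smul_zero, zero_add,
      ← Finset.sum_smul, ← sum_inner, hb, inner_zero_left, zero_smul]
  -- a leaf's neighbourhood is {n l}
  have hleafN : ∀ l : V, G.degree l = 1 → G.neighborFinset l = {n l} := by
    intro l hl
    have hmem : n l ∈ G.neighborFinset l := (G.mem_neighborFinset l (n l)).2 (hn l hl)
    have hcard : (G.neighborFinset l).card = 1 := hl
    rw [Finset.card_eq_one] at hcard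
    obtain ⟨a, ha⟩ := hcard
    rw [ha] at hmem ⊢
    rw [Finset.mem_singleton] at hmem
    rw [hmem]
  -- the neighbour of a leaf is interior
  have hnl_int : ∀ l : V, G.degree l = 1 → 2 ≤ G.degree (n l) := by
    intro l hl
    have h1 := hnoLL l (n l) (hn l hl)
    have := hdeg1 (n l)
    omega
  -- split the neighbourhood sums
  have hsplit : ∀ x ∈ I,
      (∑ y ∈ (G.neighborFinset x).filter (fun y => 2 ≤ G.degree y), h x y)
        + ∑ y ∈ (G.neighborFinset x).filter (fun y => G.degree y = 1), h x y = 0 := by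
    intro x hx
    rw [← hzero x hx]
    rw [← Finset.sum_filter_add_sum_filter_not (G.neighborFinset x) (fun y => 2 ≤ G.degree y)]
    congr 1
    apply Finset.sum_congr _ (fun _ _ => rfl)
    apply Finset.filter_congr
    intro y hy
    have := hdeg1 y
    constructor
    · intro h1; omega
    · intro h2; omega
  have hsplitS :
      (∑ x ∈ I, ∑ y ∈ (G.neighborFinset x).filter (fun y => 2 ≤ G.degree y), h x y)
        + ∑ x ∈ I, ∑ y ∈ (G.neighborFinset x).filter (fun y => G.degree y = 1), h x y = 0 := by
    rw [← Finset.sum_add_distrib]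
    exact Finset.sum_eq_zero hsplit
  -- the leaf part equals minus the RHS
  have hleafsum :
      (∑ x ∈ I, ∑ y ∈ (G.neighborFinset x).filter (fun y => G.degree y = 1), h x y)
        = ∑ l ∈ L, h (n l) l := by
    rw [Finset.sum_comm' (s' := fun y => (G.neighborFinset y).filter (fun x => 2 ≤ G.degree x))
      (t' := L) ?_]
    · apply Finset.sum_congr rfl
      intro l hl
      rw [hLdef, Finset.mem_filter] at hl
      have hfs : (G.neighborFinset l).filter (fun x => 2 ≤ G.degree x) = {n l} := by
        rw [hleafN l hl.2]
        rw [Finset.filter_singleton, if_pos (hnl_int l hl.2)]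
      rw [hfs, Finset.sum_singleton]
    · intro x y
      simp only [hIdef, hLdef, Finset.mem_filter, Finset.mem_univ, true_and,
        SimpleGraph.mem_neighborFinset]
      constructor
      · rintro ⟨hx, hy, hy1⟩
        exact ⟨⟨hy.symm, hx⟩, hy1⟩
      · rintro ⟨⟨hadj, hx⟩, hy1⟩
        exact ⟨hx, hadj.symm, hy1⟩
  -- symmetry of the interior double sum
  have hsymm :
      (∑ x ∈ I, ∑ y ∈ (G.neighborFinset x).filter (fun y => 2 ≤ G.degree y), h y x)
        = ∑ x ∈ I, ∑ y ∈ (G.neighborFinset x).filter (fun y => 2 ≤ G.degree y), h x y := by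
    rw [Finset.sum_comm' (s' := fun y => (G.neighborFinset y).filter (fun x => 2 ≤ G.degree x))
      (t' := I) ?_]
    · intro x y
      simp only [hIdef, Finset.mem_filter, Finset.mem_univ, true_and,
        SimpleGraph.mem_neighborFinset]
      constructor
      · rintro ⟨hx, hy, hy2⟩
        exact ⟨⟨hy.symm, hx⟩, hy2⟩
      · rintro ⟨⟨hadj, hx⟩, hy2⟩
        exact ⟨hx, hadj.symm, hy2⟩
  -- the interior double sum of F equals that of h
  have hFh :
      (2 : ℝ) • (∑ x ∈ I, ∑ y ∈ (G.neighborFinset x).filter (fun y => 2 ≤ G.degree y), F x y)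
        = (2 : ℝ) • ∑ x ∈ I, ∑ y ∈ (G.neighborFinset x).filter (fun y => 2 ≤ G.degree y), h x y := by
    calc (2 : ℝ) • (∑ x ∈ I, ∑ y ∈ (G.neighborFinset x).filter (fun y => 2 ≤ G.degree y), F x y)
        = ∑ x ∈ I, ∑ y ∈ (G.neighborFinset x).filter (fun y => 2 ≤ G.degree y),
            (h x y + h y x) := by
          rw [Finset.smul_sum]
          apply Finset.sum_congr rfl
          intro x _
          rw [Finset.smul_sum]
          exact Finset.sum_congr rfl fun y _ => hHF x y
      _ = (∑ x ∈ I, ∑ y ∈ (G.neighborFinset x).filter (fun y => 2 ≤ G.degree y), h x y)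
            + ∑ x ∈ I, ∑ y ∈ (G.neighborFinset x).filter (fun y => 2 ≤ G.degree y), h y x := by
          simp [Finset.sum_add_distrib]
      _ = (2 : ℝ) • ∑ x ∈ I, ∑ y ∈ (G.neighborFinset x).filter (fun y => 2 ≤ G.degree y), h x y := by
          rw [hsymm, two_smul]
  have hFh' :
      (∑ x ∈ I, ∑ y ∈ (G.neighborFinset x).filter (fun y => 2 ≤ G.degree y), F x y)
        = ∑ x ∈ I, ∑ y ∈ (G.neighborFinset x).filter (fun y => 2 ≤ G.degree y), h x y :=
    smul_right_injective (EuclideanSpace ℝ (Fin k)) (two_ne_zero) hFh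
  have hmain :
      (∑ x ∈ I, ∑ y ∈ (G.neighborFinset x).filter (fun y => 2 ≤ G.degree y), h x y)
        = - ∑ l ∈ L, h (n l) l := by
    rw [← hleafsum]
    exact eq_neg_of_add_eq_zero_left hsplitS
  -- the leaf term is minus the RHS summand
  have hleafterm : ∀ l ∈ L, h (n l) l
      = -(⟪p (n l), e⟫ • ((‖p l - p (n l)‖)⁻¹ • (p l - p (n l)))
          + ⟪(‖p l - p (n l)‖)⁻¹ • (p l - p (n l)), e⟫ • p (n l)) := by
    intro l _
    simp only [hhdef]
    rw [show p (n l) - p l = -(p l - p (n l)) from (neg_sub _ _).symm]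
    simp only [norm_neg, inner_neg_left, smul_neg, neg_smul, neg_add]
  calc (2 : ℝ) • ((1 / 2 : ℝ) •
        ∑ x ∈ I, ∑ y ∈ (G.neighborFinset x).filter (fun y => 2 ≤ G.degree y), F x y)
      = ∑ x ∈ I, ∑ y ∈ (G.neighborFinset x).filter (fun y => 2 ≤ G.degree y), F x y := by
        rw [smul_smul]; norm_num
    _ = - ∑ l ∈ L, h (n l) l := by rw [hFh', hmain]
    _ = ∑ l ∈ L, (⟪p (n l), e⟫ • ((‖p l - p (n l)‖)⁻¹ • (p l - p (n l)))
          + ⟪(‖p l - p (n l)‖)⁻¹ • (p l - p (n l)), e⟫ • p (n l)) := by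
        rw [← Finset.sum_neg_distrib]
        apply Finset.sum_congr rfl
        intro l hl
        rw [hleafterm l hl, neg_neg]
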